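/- (Lemma 1(v), scenario H₁.) Under the perturbation conditions (D₁, E₁, H₁), for every i ∈ {0, …, N} the expected return time satisfies E_{ii}(ε) = B_{ii}[0] + B_{ii}[1] ε + ȯ_{ii}(ε) for ε ∈ (0, ε₀], where ȯ_{ii}(ε)/ε → 0 as ε → 0+, B_{ii}[0] = b_i[0] + Σ_{k ∈ {0,…,N}, k ≠ i} b_k[0] A*_{k,i}[0] > 0 and B_{ii}[1] = b_i[1] + Σ_{k ∈ {0,…,N}, k ≠ i} ( b_k[0] A*_{k,i}[1] + b_k[1] A*_{k,i}[0] ), where for k < i the numbers A*_{k,i}[0], A*_{k,i}[1] are the first two coefficients in the asymptotic expansion of Γ_{k+1,i,−}(ε)/Γ_{k,i−1,+}(ε) and for k > i they are the first two coefficients in the asymptotic expansion of Γ_{i,k−1,+}(ε)/Γ_{i+1,k,−}(ε). -/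

import Mathlib

open Filter Finset Topology

noncomputable section

/-- Two-term Laurent asymptotic expansion:
`f ε = c0 * ε^h + c1 * ε^(h+1) + o(ε^(h+1))` as `ε → 0+`. -/
def laurent2 (f : ℝ → ℝ) (h : ℤ) (c0 c1 : ℝ) : Prop :=
  Filter.Tendsto (fun ε : ℝ => (f ε - c0 * ε ^ h - c1 * ε ^ (h + 1)) / ε ^ (h + 1))
    (nhdsWithin 0 (Set.Ioi 0)) (nhds 0)

/-- `Γ_{i,j,σ}(ε) = p_{i,σ}(ε) p_{i+1,σ}(ε) ⋯ p_{j,σ}(ε)`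
(the sign σ is encoded by a `Bool`: `false` = −, `true` = +). -/
def Gam (p : ℕ → Bool → ℝ → ℝ) (σ : Bool) (i j : ℕ) (ε : ℝ) : ℝ :=
  ∏ m ∈ Finset.Icc i j, p m σ ε

/-- `e_i(ε) = e_{i,−}(ε) + e_{i,+}(ε)`. -/
def eT (e : ℕ → Bool → ℝ → ℝ) (i : ℕ) (ε : ℝ) : ℝ := e i false ε + e i true ε

/-- The expected return time
`E_{ii}(ε) = e_i(ε) + ∑_{k<i} e_k(ε) Γ_{k+1,i,−}(ε)/Γ_{k,i−1,+}(ε)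
            + ∑_{i<k≤N} e_k(ε) Γ_{i,k−1,+}(ε)/Γ_{i+1,k,−}(ε)`. -/
def ret (p e : ℕ → Bool → ℝ → ℝ) (N i : ℕ) (ε : ℝ) : ℝ :=
  eT e i ε
    + ∑ k ∈ Finset.range i, eT e k ε * (Gam p false (k + 1) i ε / Gam p true k (i - 1) ε)
    + ∑ k ∈ Finset.Icc (i + 1) N, eT e k ε * (Gam p true i (k - 1) ε / Gam p false (i + 1) k ε)

/-- The stationary probability `π_i(ε) = e_i(ε) / E_{ii}(ε)`. -/
def statPi (p e : ℕ → Bool → ℝ → ℝ) (N i : ℕ) (ε : ℝ) : ℝ := eT e i ε / ret p e N i ε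

/-- `b_i[l] = b_{i,−}[l] + b_{i,+}[l]`. -/
def bT (b : ℕ → Bool → ℕ → ℝ) (i l : ℕ) : ℝ := b i false l + b i true l

lemma l2_iff (f : ℝ → ℝ) (c0 c1 : ℝ) :
    laurent2 f 0 c0 c1 ↔
      Tendsto (fun ε : ℝ => (f ε - c0 - c1 * ε) / ε) (𝓝[>] 0) (𝓝 0) := by
  unfold laurent2
  norm_num

lemma l2_add {f g : ℝ → ℝ} {c0 c1 d0 d1 : ℝ}
    (hf : laurent2 f 0 c0 c1) (hg : laurent2 g 0 d0 d1) :
    laurent2 (fun ε => f ε + g ε) 0 (c0 + d0) (c1 + d1) := by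
  rw [l2_iff] at hf hg ⊢
  have := hf.add hg
  simp only [add_zero] at this
  refine this.congr (fun ε => ?_)
  ring

lemma l2_tendsto {f : ℝ → ℝ} {c0 c1 : ℝ} (hf : laurent2 f 0 c0 c1) :
    Tendsto f (𝓝[>] 0) (𝓝 c0) := by
  rw [l2_iff] at hf
  have hid : Tendsto (fun ε : ℝ => ε) (𝓝[>] 0) (𝓝 0) :=
    tendsto_id.mono_left nhdsWithin_le_nhds
  have h1 : Tendsto (fun ε : ℝ => ((f ε - c0 - c1 * ε) / ε) * ε + c0 + c1 * ε)
      (𝓝[>] 0) (𝓝 (0 * 0 + c0 + c1 * 0)) :=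
    (((hf.mul hid).add tendsto_const_nhds).add (tendsto_const_nhds.mul hid))
  simp only [zero_mul, mul_zero, add_zero, zero_add] at h1
  refine h1.congr' ?_
  filter_upwards [self_mem_nhdsWithin] with ε hε
  have hne : ε ≠ 0 := ne_of_gt hε
  field_simp
  ring

lemma l2_mul {f g : ℝ → ℝ} {c0 c1 d0 d1 : ℝ}
    (hf : laurent2 f 0 c0 c1) (hg : laurent2 g 0 d0 d1) :
    laurent2 (fun ε => f ε * g ε) 0 (c0 * d0) (c0 * d1 + c1 * d0) := by
  have hgl := l2_tendsto hg
  rw [l2_iff] at hf hg ⊢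
  have hid : Tendsto (fun ε : ℝ => ε) (𝓝[>] 0) (𝓝 0) :=
    tendsto_id.mono_left nhdsWithin_le_nhds
  have key : Tendsto (fun ε : ℝ =>
      ((f ε - c0 - c1 * ε) / ε) * g ε + (c0 + c1 * ε) * ((g ε - d0 - d1 * ε) / ε)
        + c1 * d1 * ε)
      (𝓝[>] 0) (𝓝 (0 * d0 + (c0 + c1 * 0) * 0 + c1 * d1 * 0)) :=
    ((hf.mul hgl).add
      (((tendsto_const_nhds.add (tendsto_const_nhds.mul hid)).mul hg))).add
      (tendsto_const_nhds.mul hid)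
  simp only [zero_mul, mul_zero, add_zero, zero_add] at key
  refine key.congr' ?_
  filter_upwards [self_mem_nhdsWithin] with ε hε
  have hne : ε ≠ 0 := ne_of_gt hε
  field_simp
  ring

lemma l2_sum {ι : Type*} (s : Finset ι) (f : ι → ℝ → ℝ) (c0 c1 : ι → ℝ)
    (h : ∀ k ∈ s, laurent2 (f k) 0 (c0 k) (c1 k)) :
    laurent2 (fun ε => ∑ k ∈ s, f k ε) 0 (∑ k ∈ s, c0 k) (∑ k ∈ s, c1 k) := by
  induction s using Finset.cons_induction_on with
  | empty =>
      simp only [Finset.sum_empty]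
      rw [l2_iff]
      have : (fun ε : ℝ => ((0:ℝ) - 0 - 0 * ε) / ε) = fun _ => 0 := by
        funext ε; ring
      rw [this]; exact tendsto_const_nhds
  | cons =>
      rename_i a s' hx ih
      simp only [Finset.sum_cons]
      exact l2_add (h a (Finset.mem_cons_self a s'))
        (ih fun k hk => h k (Finset.mem_cons_of_mem hk))

lemma l2_nonneg {f : ℝ → ℝ} {c0 c1 ε₀ : ℝ} (hε₀ : 0 < ε₀)
    (hf : laurent2 f 0 c0 c1) (hpos : ∀ ε ∈ Set.Ioc (0:ℝ) ε₀, 0 < f ε) :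
    0 ≤ c0 := by
  refine ge_of_tendsto (l2_tendsto hf) ?_
  filter_upwards [Ioc_mem_nhdsGT_of_mem ⟨le_refl (0:ℝ), hε₀⟩] with ε hε
  exact (hpos ε hε).le

/-- Lemma 1(v), scenario H₁: under conditions (D₁, E₁, H₁), if for each `k ≠ i` the numbers
`As k i 0`, `As k i 1` are the first two coefficients of the asymptotic expansion of
`Γ_{k+1,i,−}(ε)/Γ_{k,i−1,+}(ε)` (for `k < i`) resp. of `Γ_{i,k−1,+}(ε)/Γ_{i+1,k,−}(ε)`
(for `k > i`), then `E_{ii}(ε) = B_{ii}[0] + B_{ii}[1] ε + o(ε)` with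
`B_{ii}[0] = b_i[0] + ∑_{k ≠ i} b_k[0] As k i 0 > 0` and
`B_{ii}[1] = b_i[1] + ∑_{k ≠ i} (b_k[0] As k i 1 + b_k[1] As k i 0)`. -/
theorem lemma1_v_H1
    (N : ℕ) (hN : 1 ≤ N) (ε₀ : ℝ) (hε₀ : 0 < ε₀) (hε₁ : ε₀ ≤ 1)
    (p e : ℕ → Bool → ℝ → ℝ)
    (hpos : ∀ i ≤ N, ∀ σ : Bool, ∀ ε ∈ Set.Ioc (0 : ℝ) ε₀, 0 < p i σ ε ∧ 0 < e i σ ε)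
    (hone : ∀ i ≤ N, ∀ ε ∈ Set.Ioc (0 : ℝ) ε₀, p i false ε + p i true ε = 1)
    (a b : ℕ → Bool → ℕ → ℝ)
    (hD : ∀ i ≤ N, ∀ σ : Bool, 0 < a i σ 0 ∧ laurent2 (p i σ) 0 (a i σ 0) (a i σ 1))
    (hE : ∀ i ≤ N, ∀ σ : Bool, 0 < b i σ 0 ∧ laurent2 (e i σ) 0 (b i σ 0) (b i σ 1))
    (As : ℕ → ℕ → ℕ → ℝ)
    (hAslow : ∀ i ≤ N, ∀ k, k < i →
      laurent2 (fun ε => Gam p false (k + 1) i ε / Gam p true k (i - 1) ε) 0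
        (As k i 0) (As k i 1))
    (hAshigh : ∀ i ≤ N, ∀ k, i < k → k ≤ N →
      laurent2 (fun ε => Gam p true i (k - 1) ε / Gam p false (i + 1) k ε) 0
        (As k i 0) (As k i 1)) :
    ∀ i ≤ N,
      laurent2 (ret p e N i) 0
          (bT b i 0 + ∑ k ∈ (Finset.range (N + 1)).erase i, bT b k 0 * As k i 0)
          (bT b i 1 + ∑ k ∈ (Finset.range (N + 1)).erase i,
            (bT b k 0 * As k i 1 + bT b k 1 * As k i 0)) ∧
        0 < bT b i 0 + ∑ k ∈ (Finset.range (N + 1)).erase i, bT b k 0 * As k i 0 := by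
  intro i hi
  -- expansions for eT
  have heT : ∀ k, k ≤ N → laurent2 (eT e k) 0 (bT b k 0) (bT b k 1) := by
    intro k hk
    exact l2_add (hE k hk false).2 (hE k hk true).2
  -- positivity of Gam
  have hGam : ∀ σ : Bool, ∀ lo hi' : ℕ, hi' ≤ N → ∀ ε ∈ Set.Ioc (0:ℝ) ε₀,
      0 < Gam p σ lo hi' ε := by
    intro σ lo hi' hhi ε hε
    refine Finset.prod_pos fun m hm => ?_
    have : m ≤ N := le_trans (Finset.mem_Icc.mp hm).2 hhi
    exact (hpos m this σ ε hε).1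
  -- split of the erase set
  have hdisj : Disjoint (Finset.range i) (Finset.Icc (i+1) N) := by
    rw [Finset.disjoint_left]
    intro k hk hk'
    simp only [Finset.mem_range] at hk
    simp only [Finset.mem_Icc] at hk'
    omega
  have hset : (Finset.range (N + 1)).erase i
      = Finset.range i ∪ Finset.Icc (i+1) N := by
    ext k
    simp only [Finset.mem_erase, Finset.mem_range, Finset.mem_union, Finset.mem_Icc]
    omega
  have hsplit : ∀ g : ℕ → ℝ, ∑ k ∈ (Finset.range (N + 1)).erase i, g k
      = ∑ k ∈ Finset.range i, g k + ∑ k ∈ Finset.Icc (i+1) N, g k := by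
    intro g
    rw [hset, Finset.sum_union hdisj]
  -- expansions for the two sums
  have hS1 : laurent2
      (fun ε => ∑ k ∈ Finset.range i,
        eT e k ε * (Gam p false (k + 1) i ε / Gam p true k (i - 1) ε)) 0
      (∑ k ∈ Finset.range i, bT b k 0 * As k i 0)
      (∑ k ∈ Finset.range i, (bT b k 0 * As k i 1 + bT b k 1 * As k i 0)) := by
    refine l2_sum _ _ _ _ fun k hk => ?_
    have hk' : k < i := Finset.mem_range.mp hk
    exact l2_mul (heT k (by omega)) (hAslow i hi k hk')
  have hS2 : laurent2
      (fun ε => ∑ k ∈ Finset.Icc (i+1) N,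
        eT e k ε * (Gam p true i (k - 1) ε / Gam p false (i + 1) k ε)) 0
      (∑ k ∈ Finset.Icc (i+1) N, bT b k 0 * As k i 0)
      (∑ k ∈ Finset.Icc (i+1) N, (bT b k 0 * As k i 1 + bT b k 1 * As k i 0)) := by
    refine l2_sum _ _ _ _ fun k hk => ?_
    have hk' : i < k ∧ k ≤ N := by
      have := Finset.mem_Icc.mp hk; omega
    exact l2_mul (heT k hk'.2) (hAshigh i hi k hk'.1 hk'.2)
  have total := l2_add (l2_add (heT i hi) hS1) hS2
  constructor
  · rw [hsplit, hsplit, ← add_assoc, ← add_assoc]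
    exact total
  · -- positivity
    have hb : ∀ k, k ≤ N → 0 < bT b k 0 := by
      intro k hk
      exact add_pos (hE k hk false).1 (hE k hk true).1
    have hAnn : ∀ k ∈ (Finset.range (N + 1)).erase i, 0 ≤ As k i 0 := by
      intro k hk
      rw [hset] at hk
      rcases Finset.mem_union.mp hk with hk | hk
      · have hk' : k < i := Finset.mem_range.mp hk
        refine l2_nonneg hε₀ (hAslow i hi k hk') fun ε hε => ?_
        exact div_pos (hGam false (k+1) i hi ε hε)
          (hGam true k (i-1) (by omega) ε hε)
      · have hk' : i < k ∧ k ≤ N := by have := Finset.mem_Icc.mp hk; omega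
        refine l2_nonneg hε₀ (hAshigh i hi k hk'.1 hk'.2) fun ε hε => ?_
        exact div_pos (hGam true i (k-1) (by omega) ε hε)
          (hGam false (i+1) k hk'.2 ε hε)
    refine add_pos_of_pos_of_nonneg (hb i hi) ?_
    refine Finset.sum_nonneg fun k hk => ?_
    have hkN : k ≤ N := by
      have := Finset.mem_range.mp (Finset.mem_of_mem_erase hk); omega
    exact mul_nonneg (hb k hkN).le (hAnn k hk)
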